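/- arXiv:2411.16541 — 2 statements merged into one kernel-verified Lean document; each statement's English description precedes it below -/
import Mathlib

section
/- Let c > 0. There exists a constant M₂ > 0, depending only on c, such that the following holds: for every compact metric space (E, Δ), every δ > 0, every gauge function h : [0, δ] → ℝ₊ (continuous, nondecreasing, h(0) = 0, h(s) > 0 for s > 0) satisfying h(2r) ≤ c·h(r) for every r ∈ (0, δ/2], every finite Borel measure μ on E, every Borel subset A of E and every b > 0: if for every x ∈ A one has limsup_{r↓0} μ(B_r(x))/h(r) ≥ b, then m^h(A) ≤ M₂ b⁻¹ μ(A). -/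
open MeasureTheory Filter Set
open scoped ENNReal NNReal Topology

/-- Let `c > 0`. There is a constant `M₂ > 0`, depending only on `c`, such that
for every compact metric space `E`, every `δ > 0`, every gauge function `h` on `[0, δ]`
(continuous, nondecreasing, `h 0 = 0`, `h s > 0` for `0 < s ≤ δ`) satisfying the doubling
condition `h (2r) ≤ c * h r` for `r ∈ (0, δ/2]`, every finite Borel measure `μ` on `E`, every
Borel set `A ⊆ E` and every `b > 0`: if `limsup_{r ↓ 0} μ(B_r(x)) / h(r) ≥ b` for every `x ∈ A`,
then the Hausdorff measure of `A` with gauge `h` is at most `M₂ * b⁻¹ * μ A`. -/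
theorem hausdorff_upper_bound (c : ℝ) (hc : 0 < c) :
    ∃ M₂ : ℝ, 0 < M₂ ∧
      ∀ (E : Type) [MetricSpace E] [CompactSpace E] [MeasurableSpace E] [BorelSpace E]
        (δ : ℝ), 0 < δ →
        ∀ h : ℝ → ℝ, ContinuousOn h (Set.Icc 0 δ) → MonotoneOn h (Set.Icc 0 δ) →
          h 0 = 0 → (∀ s ∈ Set.Ioc (0:ℝ) δ, 0 < h s) →
          (∀ r ∈ Set.Ioc (0:ℝ) (δ / 2), h (2 * r) ≤ c * h r) →
          ∀ μ : Measure E, IsFiniteMeasure μ →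
            ∀ A : Set E, MeasurableSet A → ∀ b : ℝ, 0 < b →
              (∀ x ∈ A,
                Filter.limsup
                  (fun r : ℝ => μ (Metric.closedBall x r) / ENNReal.ofReal (h r))
                  (nhdsWithin 0 (Set.Ioi 0)) ≥ ENNReal.ofReal b) →
              Measure.mkMetric (fun r : ℝ≥0∞ => ENNReal.ofReal (h r.toReal)) A ≤
                ENNReal.ofReal M₂ * (ENNReal.ofReal b)⁻¹ * μ A := by
  classical
  set C : ℝ := max c 1 with hCdef
  have hC1 : (1:ℝ) ≤ C := le_max_right _ _
  have hC0 : (0:ℝ) < C := lt_of_lt_of_le one_pos hC1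
  refine ⟨2 * C ^ 3, by positivity, ?_⟩
  intro E _ _ _ _ δ hδ h hcont hmono h0 hpos hdbl μ hfin A hA b hb hlimsup
  -- preliminary facts about h
  have hnonneg : ∀ s ∈ Set.Icc (0:ℝ) δ, 0 ≤ h s := by
    intro s hs
    rcases eq_or_lt_of_le hs.1 with rfl | hs0
    · exact le_of_eq h0.symm
    · exact (hpos s ⟨hs0, hs.2⟩).le
  have hdblC : ∀ r ∈ Set.Ioc (0:ℝ) (δ/2), h (2*r) ≤ C * h r := by
    intro r hr
    refine (hdbl r hr).trans ?_
    have := hnonneg r ⟨hr.1.le, hr.2.trans (by linarith)⟩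
    nlinarith [le_max_left c 1]
  have hiter : ∀ r : ℝ, 0 < r → r ≤ δ/8 → h (8*r) ≤ C^3 * h r := by
    intro r hr0 hr
    have h1 : h (2*r) ≤ C * h r := hdblC r ⟨hr0, by linarith⟩
    have h2 : h (2*(2*r)) ≤ C * h (2*r) := hdblC (2*r) ⟨by linarith, by linarith⟩
    have h3 : h (2*(2*(2*r))) ≤ C * h (2*(2*r)) := hdblC (2*(2*r)) ⟨by linarith, by linarith⟩
    have e : 8*r = 2*(2*(2*r)) := by ring
    rw [e]
    calc h (2*(2*(2*r))) ≤ C * h (2*(2*r)) := h3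
      _ ≤ C * (C * h (2*r)) := mul_le_mul_of_nonneg_left h2 hC0.le
      _ ≤ C * (C * (C * h r)) :=
          mul_le_mul_of_nonneg_left (mul_le_mul_of_nonneg_left h1 hC0.le) hC0.le
      _ = C^3 * h r := by ring
  -- goal ≤ RHS + ε for every ε
  have hbne : ENNReal.ofReal b ≠ 0 := by
    simp [ENNReal.ofReal_eq_zero, not_le, hb]
  have hXne : ENNReal.ofReal (2*C^3) * (ENNReal.ofReal b)⁻¹ ≠ ∞ :=
    ENNReal.mul_ne_top ENNReal.ofReal_ne_top (ENNReal.inv_ne_top.2 hbne)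
  refine ENNReal.le_of_forall_pos_le_add fun ε hε _ => ?_
  set X : ℝ≥0∞ := ENNReal.ofReal (2*C^3) * (ENNReal.ofReal b)⁻¹ with hXdef
  set η : ℝ≥0∞ := (ε : ℝ≥0∞) / X with hηdef
  have hηne : η ≠ 0 := by
    refine (ENNReal.div_pos (by exact_mod_cast hε.ne') hXne).ne'
  -- outer regular open set
  obtain ⟨U, hAU, hUopen, hUμ⟩ :=
    Set.exists_isOpen_lt_add (μ := μ) A (measure_ne_top μ A) hηne
  -- the key covering lemma
  have key : ∀ ε' : ℝ, 0 < ε' → ε' ≤ δ/8 →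
      ∃ u : Set (E × ℝ), u.Countable ∧ (∀ p ∈ u, 0 < p.2 ∧ p.2 ≤ ε') ∧
        (A ⊆ ⋃ p ∈ u, Metric.closedBall p.1 (4*p.2)) ∧
        ∑' (p : ↥u), ENNReal.ofReal (h (p : E × ℝ).2) ≤
          (ENNReal.ofReal (b/2))⁻¹ * (μ A + η) := by
    intro ε' hε'0 hε'δ
    set T : Set (E × ℝ) := {p | p.1 ∈ A ∧ 0 < p.2 ∧ p.2 ≤ ε' ∧
      Metric.closedBall p.1 p.2 ⊆ U ∧
      ENNReal.ofReal (b/2) * ENNReal.ofReal (h p.2) ≤ μ (Metric.closedBall p.1 p.2)} with hTdef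
    obtain ⟨u, huT, hudisj, hcov⟩ :=
      Vitali.exists_disjoint_subfamily_covering_enlargement_closedBall T Prod.fst Prod.snd ε'
        (fun p hp => hp.2.2.1) 4 (by norm_num)
    have hmem : ∀ p ∈ u, 0 < p.2 ∧ p.2 ≤ ε' := fun p hp => ⟨(huT hp).2.1, (huT hp).2.2.1⟩
    -- positivity of measures of the balls
    have hposμ : ∀ p ∈ u, 0 < μ (Metric.closedBall p.1 p.2) := by
      intro p hp
      have h2 := (huT hp).2.2.2.2
      refine lt_of_lt_of_le ?_ h2
      have hh : 0 < h p.2 := hpos p.2 ⟨(hmem p hp).1, (hmem p hp).2.trans (by linarith)⟩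
      exact ENNReal.mul_pos (by simp [ENNReal.ofReal_eq_zero, not_le, half_pos hb])
        (by simp [ENNReal.ofReal_eq_zero, not_le, hh]) |>.trans_le le_rfl
    -- countability
    have hucount : u.Countable := by
      have := MeasureTheory.Measure.countable_meas_pos_of_disjoint_iUnion (μ := μ)
        (As := fun p : ↥u => Metric.closedBall (p : E × ℝ).1 (p : E × ℝ).2)
        (fun p => measurableSet_closedBall)
        (fun p q hpq => hudisj p.2 q.2 (fun hval => hpq (Subtype.ext hval)))
      have huniv : {i : ↥u | 0 < μ (Metric.closedBall (i : E × ℝ).1 (i : E × ℝ).2)} = univ := by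
        ext p; simpa using hposμ p p.2
      rw [huniv] at this
      exact Set.countable_coe_iff.1 (Set.countable_univ_iff.1 this)
    refine ⟨u, hucount, hmem, ?_, ?_⟩
    · -- covering
      intro x hx
      have hxU : x ∈ U := hAU hx
      obtain ⟨ρ, hρ0, hρU⟩ : ∃ ρ > 0, Metric.closedBall x ρ ⊆ U :=
        (Metric.nhds_basis_closedBall.mem_iff).1 (hUopen.mem_nhds hxU)
      have hfreq : ∃ᶠ r in nhdsWithin (0:ℝ) (Set.Ioi 0),
          ENNReal.ofReal (b/2) < μ (Metric.closedBall x r) / ENNReal.ofReal (h r) := by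
        apply frequently_lt_of_lt_limsup (by isBoundedDefault)
        exact lt_of_lt_of_le (by
          rw [ENNReal.ofReal_lt_ofReal_iff hb]; linarith) (hlimsup x hx)
      have hev : ∀ᶠ r in nhdsWithin (0:ℝ) (Set.Ioi 0),
          0 < r ∧ r ≤ ε' ∧ Metric.closedBall x r ⊆ U := by
        filter_upwards [Ioc_mem_nhdsGT_of_mem (Set.left_mem_Ico.2 (lt_min hε'0 hρ0))] with r hr
        exact ⟨hr.1, hr.2.trans (min_le_left _ _),
          (Metric.closedBall_subset_closedBall (hr.2.trans (min_le_right _ _))).trans hρU⟩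
      obtain ⟨r, hlt, hr0, hrε, hrU⟩ := (hfreq.and_eventually hev).exists
      have hh : 0 < h r := hpos r ⟨hr0, by linarith⟩
      have hmul : ENNReal.ofReal (b/2) * ENNReal.ofReal (h r) ≤ μ (Metric.closedBall x r) :=
        ((ENNReal.lt_div_iff_mul_lt
          (Or.inl (by simp [ENNReal.ofReal_eq_zero, not_le, hh]))
          (Or.inl ENNReal.ofReal_ne_top)).1 hlt).le
      have hxT : (⟨x, r⟩ : E × ℝ) ∈ T := ⟨hx, hr0, hrε, hrU, hmul⟩
      obtain ⟨p, hpu, hsub⟩ := hcov _ hxT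
      exact Set.mem_biUnion hpu (hsub (Metric.mem_closedBall_self hr0.le))
    · -- the sum bound
      have hb2 : ENNReal.ofReal (b/2) ≠ 0 := by
        simp [ENNReal.ofReal_eq_zero, not_le, half_pos hb]
      have hstep : ∀ p : ↥u, ENNReal.ofReal (h (p : E × ℝ).2) ≤
          (ENNReal.ofReal (b/2))⁻¹ * μ (Metric.closedBall (p : E × ℝ).1 (p : E × ℝ).2) := by
        intro p
        have hT := (huT p.2).2.2.2.2
        have hle : ENNReal.ofReal (h (p : E × ℝ).2) ≤
            μ (Metric.closedBall (p : E × ℝ).1 (p : E × ℝ).2) / ENNReal.ofReal (b/2) :=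
          (ENNReal.le_div_iff_mul_le (Or.inl hb2) (Or.inl ENNReal.ofReal_ne_top)).2
            (by rw [mul_comm]; exact hT)
        simpa [div_eq_mul_inv, mul_comm] using hle
      calc ∑' (p : ↥u), ENNReal.ofReal (h (p : E × ℝ).2)
          ≤ ∑' (p : ↥u), (ENNReal.ofReal (b/2))⁻¹ *
              μ (Metric.closedBall (p : E × ℝ).1 (p : E × ℝ).2) :=
            ENNReal.tsum_le_tsum hstep
        _ = (ENNReal.ofReal (b/2))⁻¹ *
              ∑' (p : ↥u), μ (Metric.closedBall (p : E × ℝ).1 (p : E × ℝ).2) :=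
            ENNReal.tsum_mul_left
        _ ≤ (ENNReal.ofReal (b/2))⁻¹ * (μ A + η) := by
            gcongr
            rw [← measure_biUnion hucount hudisj (fun p _ => measurableSet_closedBall)]
            refine le_trans (measure_mono ?_) hUμ.le
            exact Set.iUnion₂_subset fun p hp => (huT hp).2.2.2.1
  -- scales
  set e : ℕ → ℝ := fun n => min (δ/8) (1/(n+1)) with hedef
  have he0 : ∀ n, 0 < e n := fun n => lt_min (by linarith) (by positivity)
  have heδ : ∀ n, e n ≤ δ/8 := fun n => min_le_left _ _
  choose u hucount hmem hcov hsum using fun n => key (e n) (he0 n) (heδ n)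
  haveI : ∀ n, Countable ↥(u n) := fun n => (hucount n).to_subtype
  -- tendsto of scales
  have hetend : Tendsto e atTop (𝓝 0) := by
    refine squeeze_zero (fun n => (he0 n).le) (fun n => min_le_right _ _) ?_
    exact tendsto_one_div_add_atTop_nhds_zero_nat
  have htend : Tendsto (fun n => ENNReal.ofReal (8 * e n)) atTop (𝓝 0) := by
    have h8 : Tendsto (fun n => 8 * e n) atTop (𝓝 (8*0)) := hetend.const_mul 8
    rw [mul_zero] at h8
    simpa using ENNReal.tendsto_ofReal h8
  -- diameter bounds
  have hdiam8 : ∀ (x : E) (ρ : ℝ), 0 ≤ ρ →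
      EMetric.diam (Metric.closedBall x (4*ρ)) ≤ ENNReal.ofReal (8*ρ) := by
    intro x ρ hρ
    refine EMetric.diam_le fun y hy z hz => ?_
    rw [edist_dist]
    apply ENNReal.ofReal_le_ofReal
    have hy' : dist y x ≤ 4*ρ := Metric.mem_closedBall.1 hy
    have hz' : dist z x ≤ 4*ρ := Metric.mem_closedBall.1 hz
    calc dist y z ≤ dist y x + dist x z := dist_triangle _ _ _
      _ ≤ 4*ρ + 4*ρ := by rw [dist_comm x z]; exact add_le_add hy' hz'
      _ = 8*ρ := by ring
  have hdiam : ∀ᶠ n in atTop, ∀ i : ↥(u n),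
      EMetric.diam (Metric.closedBall (i : E × ℝ).1 (4*(i : E × ℝ).2)) ≤
        ENNReal.ofReal (8 * e n) := by
    refine Eventually.of_forall fun n i => ?_
    refine le_trans (hdiam8 _ _ (hmem n _ i.2).1.le) (ENNReal.ofReal_le_ofReal ?_)
    have := (hmem n _ i.2).2
    linarith
  have hcover : ∀ᶠ n in atTop, A ⊆
      ⋃ i : ↥(u n), Metric.closedBall (i : E × ℝ).1 (4*(i : E × ℝ).2) := by
    refine Eventually.of_forall fun n x hx => ?_
    obtain ⟨p, hp, hxp⟩ := Set.mem_iUnion₂.1 (hcov n hx)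
    exact Set.mem_iUnion.2 ⟨⟨p, hp⟩, hxp⟩
  refine le_trans (MeasureTheory.Measure.mkMetric_le_liminf_tsum A _ htend
    (fun n (i : ↥(u n)) => Metric.closedBall (i : E × ℝ).1 (4*(i : E × ℝ).2))
    hdiam hcover _) ?_
  -- bound the sums
  have hbound : ∀ n, ∑' (i : ↥(u n)), ENNReal.ofReal
      (h (EMetric.diam (Metric.closedBall (i : E × ℝ).1 (4*(i : E × ℝ).2))).toReal) ≤
      ENNReal.ofReal (C^3) * ((ENNReal.ofReal (b/2))⁻¹ * (μ A + η)) := by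
    intro n
    have hterm : ∀ i : ↥(u n), ENNReal.ofReal
        (h (EMetric.diam (Metric.closedBall (i : E × ℝ).1 (4*(i : E × ℝ).2))).toReal) ≤
        ENNReal.ofReal (C^3) * ENNReal.ofReal (h (i : E × ℝ).2) := by
      intro i
      obtain ⟨hρ0, hρε⟩ := hmem n _ i.2
      set ρ := (i : E × ℝ).2 with hρdef
      set d := (EMetric.diam (Metric.closedBall (i : E × ℝ).1 (4*ρ))).toReal with hddef
      have hdr : d ≤ 8*ρ :=
        ENNReal.toReal_le_of_le_ofReal (by positivity) (hdiam8 _ _ hρ0.le)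
      have hd0 : 0 ≤ d := ENNReal.toReal_nonneg
      have h8ρδ : 8*ρ ≤ δ := by
        have := heδ n; linarith [hρε]
      have hhd : h d ≤ h (8*ρ) :=
        hmono ⟨hd0, hdr.trans h8ρδ⟩ ⟨by positivity, h8ρδ⟩ hdr
      have hit : h (8*ρ) ≤ C^3 * h ρ := hiter ρ hρ0 (hρε.trans (heδ n))
      calc ENNReal.ofReal (h d) ≤ ENNReal.ofReal (C^3 * h ρ) :=
            ENNReal.ofReal_le_ofReal (hhd.trans hit)
        _ = ENNReal.ofReal (C^3) * ENNReal.ofReal (h ρ) :=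
            ENNReal.ofReal_mul (by positivity)
    calc ∑' (i : ↥(u n)), ENNReal.ofReal
          (h (EMetric.diam (Metric.closedBall (i : E × ℝ).1 (4*(i : E × ℝ).2))).toReal)
        ≤ ∑' (i : ↥(u n)), ENNReal.ofReal (C^3) * ENNReal.ofReal (h (i : E × ℝ).2) :=
          ENNReal.tsum_le_tsum hterm
      _ = ENNReal.ofReal (C^3) * ∑' (i : ↥(u n)), ENNReal.ofReal (h (i : E × ℝ).2) :=
          ENNReal.tsum_mul_left
      _ ≤ ENNReal.ofReal (C^3) * ((ENNReal.ofReal (b/2))⁻¹ * (μ A + η)) := by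
          gcongr
          exact hsum n
  -- final arithmetic
  have hb2ne : ENNReal.ofReal (b/2) ≠ 0 := by
    simp [ENNReal.ofReal_eq_zero, not_le, half_pos hb]
  have hfinal : ENNReal.ofReal (C^3) * ((ENNReal.ofReal (b/2))⁻¹ * (μ A + η)) ≤
      ENNReal.ofReal (2*C^3) * (ENNReal.ofReal b)⁻¹ * μ A + ε := by
    have hb2inv : (ENNReal.ofReal (b/2))⁻¹ = ENNReal.ofReal 2 * (ENNReal.ofReal b)⁻¹ := by
      rw [ENNReal.ofReal_div_of_pos (by norm_num : (0:ℝ) < 2),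
        ENNReal.inv_div (Or.inl ENNReal.ofReal_ne_top)
          (Or.inl (by simp : ENNReal.ofReal 2 ≠ 0)),
        div_eq_mul_inv]
    have hX : ENNReal.ofReal (C^3) * (ENNReal.ofReal (b/2))⁻¹ = X := by
      rw [hb2inv, ← mul_assoc, ← ENNReal.ofReal_mul (by positivity), hXdef]
      norm_num [mul_comm]
    calc ENNReal.ofReal (C^3) * ((ENNReal.ofReal (b/2))⁻¹ * (μ A + η))
        = (ENNReal.ofReal (C^3) * (ENNReal.ofReal (b/2))⁻¹) * (μ A + η) :=
          (mul_assoc _ _ _).symm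
      _ = X * (μ A + η) := by rw [hX]
      _ = X * μ A + X * η := mul_add _ _ _
      _ ≤ ENNReal.ofReal (2*C^3) * (ENNReal.ofReal b)⁻¹ * μ A + ε := by
          rw [hXdef]
          gcongr
          exact ENNReal.mul_div_le
  exact liminf_le_of_frequently_le
    (Eventually.frequently (Eventually.of_forall fun n => (hbound n).trans hfinal))
end

section
/- Let d : [0,1] × [0,1] → ℝ₊ be a continuous pseudometric on [0,1] (i.e. d is continuous, symmetric, satisfies the triangle inequality, and d(s,s) = 0 for all s). Suppose there exists an integer n₀ ≥ 1 such that for every n ≥ n₀ and every i ∈ {1, …, 2ⁿ} one has d((i−1)2^{-n}, i 2^{-n}) ≤ n 2^{-n/2}. Then there exists a constant C > 0 such that for all s, t ∈ [0,1] with s ≠ t: d(s,t) ≤ C (1 + log(1/|t − s|)) |t − s|^{1/2}. -/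
open Set

open Filter Topology Finset



noncomputable def dyA (n : ℕ) (t : ℝ) : ℝ := (⌊t * 2^n⌋ : ℝ) / 2^n

lemma dyA_mem {t : ℝ} (ht : t ∈ Icc (0:ℝ) 1) (n : ℕ) : dyA n t ∈ Icc (0:ℝ) 1 := by
  obtain ⟨h0, h1⟩ := ht
  have h2 : (0:ℝ) < 2^n := by positivity
  rw [dyA]
  constructor
  · apply div_nonneg _ h2.le
    exact_mod_cast Int.floor_nonneg.2 (by positivity)
  · rw [div_le_one h2]
    have h3 : (⌊t * 2^n⌋ : ℝ) ≤ t * 2^n := Int.floor_le _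
    nlinarith

lemma dyA_le {t : ℝ} (n : ℕ) : dyA n t ≤ t := by
  have h2 : (0:ℝ) < 2^n := by positivity
  rw [dyA, div_le_iff₀ h2]
  exact Int.floor_le _

lemma dyA_gt {t : ℝ} (n : ℕ) : t - ((2:ℝ)^n)⁻¹ < dyA n t := by
  have h2 : (0:ℝ) < 2^n := by positivity
  rw [dyA, lt_div_iff₀ h2]
  have := Int.lt_floor_add_one (t * 2^n)
  have h3 : (t - (2^n)⁻¹) * 2^n = t * 2^n - 1 := by field_simp
  linarith

lemma dyA_tendsto (t : ℝ) : Tendsto (fun N => dyA N t) atTop (𝓝 t) := by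
  have h1 : Tendsto (fun N : ℕ => t - ((2:ℝ)^N)⁻¹) atTop (𝓝 (t - 0)) :=
    tendsto_const_nhds.sub (tendsto_inv_atTop_zero.comp (tendsto_pow_atTop_atTop_of_one_lt one_lt_two))
  rw [sub_zero] at h1
  exact tendsto_of_tendsto_of_tendsto_of_le_of_le h1 tendsto_const_nhds
    (fun N => (dyA_gt N).le) (fun N => dyA_le N)

-- power bookkeeping
lemma w_eq (n : ℕ) : (2:ℝ) ^ (-(n:ℝ)/2) = (Real.sqrt 2)⁻¹ ^ n := by
  have h2 : (0:ℝ) < 2 := two_pos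
  have hs : Real.sqrt 2 = (2:ℝ) ^ ((1:ℝ)/2) := by
    rw [Real.sqrt_eq_rpow]
  rw [hs, ← Real.rpow_neg_one ((2:ℝ) ^ ((1:ℝ)/2)), ← Real.rpow_natCast, ← Real.rpow_mul h2.le,
    ← Real.rpow_mul h2.le]
  ring_nf


-- facts about r = (√2)⁻¹
lemma r_pos : 0 < (Real.sqrt 2)⁻¹ := by positivity
lemma r_lt : (Real.sqrt 2)⁻¹ < 1 := by
  rw [inv_lt_one_iff₀]
  right
  nlinarith [Real.sq_sqrt (by norm_num : (0:ℝ) ≤ 2), Real.sqrt_nonneg 2]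

lemma geom_bound (K : ℕ) :
    ∑ k ∈ Finset.range K, ((k:ℝ)+1) * (Real.sqrt 2)⁻¹ ^ k ≤ 12 := by
  set r : ℝ := (Real.sqrt 2)⁻¹ with hr
  have hr0 := r_pos
  have hr1 := r_lt
  have hnorm : ‖r‖ < 1 := by rw [Real.norm_eq_abs, abs_of_pos hr0]; exact hr1
  have h1 : HasSum (fun k : ℕ => (k:ℝ) * r ^ k) (r / (1 - r) ^ 2) :=
    hasSum_coe_mul_geometric_of_norm_lt_one hnorm
  have h2 : HasSum (fun k : ℕ => r ^ k) (1 - r)⁻¹ := hasSum_geometric_of_norm_lt_one hnorm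
  have h3 : HasSum (fun k : ℕ => ((k:ℝ)+1) * r ^ k) (r / (1 - r) ^ 2 + (1 - r)⁻¹) := by
    have := h1.add h2
    convert this using 2 with k
    ring
  have h4 : ∑ k ∈ Finset.range K, ((k:ℝ)+1) * r ^ k ≤ r / (1 - r) ^ 2 + (1 - r)⁻¹ :=
    sum_le_hasSum _ (fun k _ => by positivity) h3
  refine h4.trans ?_
  have hs : Real.sqrt 2 ≤ 1.5 := by
    rw [show (1.5:ℝ) = Real.sqrt (1.5^2) by rw [Real.sqrt_sq]; norm_num]
    apply Real.sqrt_le_sqrt; norm_num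
  have hs2 : (1.41:ℝ) ≤ Real.sqrt 2 := by
    rw [show (1.41:ℝ) = Real.sqrt (1.41^2) by rw [Real.sqrt_sq]; norm_num]
    apply Real.sqrt_le_sqrt; norm_num
  have hrle : r ≤ 1/1.41 := by
    rw [hr, one_div]
    exact inv_anti₀ (by norm_num) hs2
  have h1rpos : (0:ℝ) < 1 - r := by linarith
  have key : r / (1 - r) ^ 2 + (1 - r)⁻¹ = ((1-r)^2)⁻¹ := by
    field_simp
    ring
  rw [key]
  have h12 : (1:ℝ)/12 ≤ (1-r)^2 := by nlinarith
  calc ((1-r)^2)⁻¹ ≤ ((1:ℝ)/12)⁻¹ := inv_anti₀ (by norm_num) h12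
    _ = 12 := by norm_num

lemma tailL (n N : ℕ) :
    ∑ m ∈ Finset.Ico n N, ((m:ℝ)+1) * (Real.sqrt 2)⁻¹ ^ (m+1)
      ≤ 12 * ((n:ℝ)+1) * (Real.sqrt 2)⁻¹ ^ n := by
  set r : ℝ := (Real.sqrt 2)⁻¹ with hr
  have hr0 := r_pos
  have hr1 := r_lt
  rw [Finset.sum_Ico_eq_sum_range]
  calc ∑ k ∈ Finset.range (N - n), ((↑(n + k):ℝ)+1) * r ^ (n + k + 1)
      ≤ ∑ k ∈ Finset.range (N - n), ((n:ℝ)+1) * r^n * (((k:ℝ)+1) * r^k) := by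
        apply Finset.sum_le_sum
        intro k _
        push_cast
        have h1 : ((n:ℝ)+(k:ℝ)+1) ≤ ((n:ℝ)+1)*((k:ℝ)+1) := by
          have : (0:ℝ) ≤ (n:ℝ) * k := by positivity
          nlinarith
        have h2 : r^(n+k+1) ≤ r^n * r^k := by
          rw [pow_add, pow_add, pow_one]
          have : (0:ℝ) < r^n * r^k := by positivity
          nlinarith
        have h3 : (0:ℝ) ≤ r^n * r^k := by positivity
        calc ((n:ℝ)+(k:ℝ)+1) * r ^ (n + k + 1) ≤ (((n:ℝ)+1)*((k:ℝ)+1)) * (r^n * r^k) := by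
              apply mul_le_mul h1 h2 (by positivity) (by positivity)
          _ = ((n:ℝ)+1) * r^n * (((k:ℝ)+1) * r^k) := by ring
    _ = ((n:ℝ)+1) * r^n * ∑ k ∈ Finset.range (N - n), (((k:ℝ)+1) * r^k) := by
        rw [← Finset.mul_sum]
    _ ≤ ((n:ℝ)+1) * r^n * 12 := by
        apply mul_le_mul_of_nonneg_left (geom_bound _) (by positivity)
    _ = 12 * ((n:ℝ)+1) * r^n := by ring

section dlemmas

variable (d : ℝ → ℝ → ℝ)
  (hnonneg : ∀ s ∈ Set.Icc (0:ℝ) 1, ∀ t ∈ Set.Icc (0:ℝ) 1, 0 ≤ d s t)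
  (hrefl : ∀ s ∈ Set.Icc (0:ℝ) 1, d s s = 0)
  (htriangle : ∀ s ∈ Set.Icc (0:ℝ) 1, ∀ t ∈ Set.Icc (0:ℝ) 1, ∀ u ∈ Set.Icc (0:ℝ) 1,
      d s u ≤ d s t + d t u)
  (n₀ : ℕ)
  (hdyadic : ∀ n : ℕ, n₀ ≤ n → ∀ i : ℕ, 1 ≤ i → i ≤ 2 ^ n →
      d (((i : ℝ) - 1) / 2 ^ n) ((i : ℝ) / 2 ^ n) ≤ (n : ℝ) * (2:ℝ) ^ (-(n:ℝ) / 2))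

include hnonneg hrefl n₀ hdyadic in
lemma stepL {t : ℝ} (ht : t ∈ Icc (0:ℝ) 1) {m : ℕ} (hm : n₀ ≤ m + 1) :
    d (dyA m t) (dyA (m+1) t) ≤ ((m:ℝ)+1) * (Real.sqrt 2)⁻¹ ^ (m+1) := by
  have hW : ((m:ℝ)+1) * (Real.sqrt 2)⁻¹ ^ (m+1)
      = ((m+1:ℕ):ℝ) * (2:ℝ) ^ (-((m+1:ℕ):ℝ)/2) := by
    rw [w_eq]; push_cast; ring
  obtain ⟨ht0, ht1⟩ := ht
  set a := ⌊t * 2^m⌋ with ha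
  set b := ⌊t * 2^(m+1)⌋ with hb
  have hfl : (a:ℝ) ≤ t*2^m := Int.floor_le _
  have hfu : t*2^m < a+1 := Int.lt_floor_add_one _
  have ha0 : 0 ≤ a := Int.floor_nonneg.2 (by positivity)
  have hkey : t * 2^(m+1) = (t*2^m)*2 := by ring
  have hb1 : 2*a ≤ b := by
    rw [hb]
    apply Int.le_floor.2
    push_cast
    rw [hkey]; linarith
  have hb2 : b ≤ 2*a+1 := by
    have : b < 2*a+2 := by
      rw [hb]
      apply Int.floor_lt.2
      push_cast
      rw [hkey]; linarith
    omega
  have hb3 : b ≤ 2^(m+1) := by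
    have h := Int.floor_le_floor (R := ℝ) (show t * 2^(m+1) ≤ (((2^(m+1):ℤ)):ℝ) by
      push_cast; nlinarith [pow_pos (show (0:ℝ) < 2 by norm_num) (m+1)])
    rwa [Int.floor_intCast] at h
  rcases (by omega : b = 2*a ∨ b = 2*a+1) with h | h
  · have heq : dyA (m+1) t = dyA m t := by
      rw [dyA, dyA, ← ha, ← hb, h]
      push_cast
      field_simp
      ring
    rw [heq, hrefl _ (dyA_mem ⟨ht0, ht1⟩ m), hW]
    positivity
  · have h1 : 1 ≤ b.toNat := by omega
    have h2 : b.toNat ≤ 2^(m+1) := Int.toNat_le.2 (by exact_mod_cast hb3)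
    have hbnn : (0:ℤ) ≤ b := by omega
    have hcast : ((b.toNat : ℝ)) = ((b:ℝ)) := by
      exact_mod_cast Int.toNat_of_nonneg hbnn
    have hd := hdyadic (m+1) hm b.toNat h1 h2
    rw [hcast] at hd
    have e1 : ((b:ℝ) - 1) / 2^(m+1) = dyA m t := by
      rw [dyA, ← ha, h]
      push_cast
      field_simp
      ring
    have e2 : ((b:ℝ)) / 2^(m+1) = dyA (m+1) t := by
      rw [dyA, ← hb]
    rw [e1, e2] at hd
    rw [hW]
    exact_mod_cast hd

include hnonneg hrefl htriangle hdyadic in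
lemma chainL {t : ℝ} (ht : t ∈ Icc (0:ℝ) 1) {n N : ℕ} (hn : n₀ ≤ n) (hnN : n ≤ N) :
    d (dyA n t) (dyA N t) ≤ ∑ m ∈ Finset.Ico n N, ((m:ℝ)+1) * (Real.sqrt 2)⁻¹ ^ (m+1) := by
  induction N, hnN using Nat.le_induction with
  | base =>
      rw [Finset.Ico_self, Finset.sum_empty, hrefl _ (dyA_mem ht n)]
  | succ N hnN ih =>
      have tri := htriangle _ (dyA_mem ht n) _ (dyA_mem ht N) _ (dyA_mem ht (N+1))
      have st := stepL d hnonneg hrefl n₀ hdyadic ht (show n₀ ≤ N + 1 by omega)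
      rw [Finset.sum_Ico_succ_top hnN]
      linarith

include hnonneg hrefl htriangle hdyadic in
lemma approxL
    (hcont : ContinuousOn (fun p : ℝ × ℝ => d p.1 p.2) (Set.Icc 0 1 ×ˢ Set.Icc 0 1))
    {t : ℝ} (ht : t ∈ Icc (0:ℝ) 1) {n : ℕ} (hn : n₀ ≤ n) :
    d (dyA n t) t ≤ 12 * ((n:ℝ)+1) * (Real.sqrt 2)⁻¹ ^ n := by
  have hmem : (dyA n t, t) ∈ Icc (0:ℝ) 1 ×ˢ Icc (0:ℝ) 1 := ⟨dyA_mem ht n, ht⟩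
  have htend : Tendsto (fun N => (dyA n t, dyA N t)) atTop
      (𝓝[Icc (0:ℝ) 1 ×ˢ Icc (0:ℝ) 1] (dyA n t, t)) := by
    rw [tendsto_nhdsWithin_iff]
    constructor
    · exact Filter.Tendsto.prodMk_nhds tendsto_const_nhds (dyA_tendsto t)
    · exact Filter.Eventually.of_forall fun N => ⟨dyA_mem ht n, dyA_mem ht N⟩
  have hF : Tendsto (fun N => d (dyA n t) (dyA N t)) atTop (𝓝 (d (dyA n t) t)) :=
    ((hcont _ hmem).tendsto).comp htend
  apply le_of_tendsto hF
  filter_upwards [eventually_ge_atTop n] with N hN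
  calc d (dyA n t) (dyA N t)
      ≤ ∑ m ∈ Finset.Ico n N, ((m:ℝ)+1) * (Real.sqrt 2)⁻¹ ^ (m+1) :=
        chainL d hnonneg hrefl htriangle n₀ hdyadic ht hn hN
    _ ≤ 12 * ((n:ℝ)+1) * (Real.sqrt 2)⁻¹ ^ n := tailL n N

lemma memdiv {a n : ℕ} (ha : a ≤ 2^n) : ((a:ℝ))/2^n ∈ Icc (0:ℝ) 1 := by
  have h2 : (0:ℝ) < 2^n := by positivity
  constructor
  · positivity
  · rw [div_le_one h2]
    exact_mod_cast ha

include hrefl htriangle hdyadic in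
lemma horizL {n : ℕ} (hn : n₀ ≤ n) :
    ∀ b : ℕ, b ≤ 2^n → ∀ a : ℕ, a ≤ b →
      d ((a:ℝ)/2^n) ((b:ℝ)/2^n) ≤ ((b:ℝ) - a) * ((n:ℝ) * (2:ℝ)^(-(n:ℝ)/2)) := by
  intro b
  induction b with
  | zero =>
      intro _ a ha
      have haz : a = 0 := by omega
      subst haz
      rw [hrefl _ (memdiv (by positivity))]
      simp
  | succ b ih =>
      intro hb a ha
      rcases (by omega : a = b + 1 ∨ a ≤ b) with h | h
      · subst h
        rw [hrefl _ (memdiv hb)]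
        have : (0:ℝ) ≤ (n:ℝ) * (2:ℝ)^(-(n:ℝ)/2) := by positivity
        simp
      · have ih2 := ih (by omega) a h
        have tri := htriangle _ (memdiv (show a ≤ 2^n by omega)) _
          (memdiv (show b ≤ 2^n by omega)) _ (memdiv hb)
        have hd := hdyadic n hn (b+1) (by omega) hb
        have e1 : ((((b+1:ℕ)):ℝ) - 1) / 2^n = ((b:ℕ):ℝ)/2^n := by push_cast; ring
        rw [e1] at hd
        push_cast at hd tri ⊢
        linarith

include hnonneg hrefl htriangle hdyadic in
lemma boundL
    (hcont : ContinuousOn (fun p : ℝ × ℝ => d p.1 p.2) (Set.Icc 0 1 ×ˢ Set.Icc 0 1))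
    (hsymm : ∀ s ∈ Set.Icc (0:ℝ) 1, ∀ t ∈ Set.Icc (0:ℝ) 1, d s t = d t s)
    {s t : ℝ} (hs : s ∈ Icc (0:ℝ) 1) (ht : t ∈ Icc (0:ℝ) 1) :
    d s t ≤ 24 * ((n₀:ℝ)+1) * (Real.sqrt 2)⁻¹ ^ n₀
      + (2:ℝ)^n₀ * ((n₀:ℝ) * (2:ℝ)^(-(n₀:ℝ)/2)) := by
  have hp : (0:ℝ) < 2^n₀ := by positivity
  set A := (⌊s * 2^n₀⌋).toNat with hA
  set B := (⌊t * 2^n₀⌋).toNat with hB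
  have hAnn : (0:ℤ) ≤ ⌊s * 2^n₀⌋ := Int.floor_nonneg.2 (mul_nonneg hs.1 (by positivity))
  have hBnn : (0:ℤ) ≤ ⌊t * 2^n₀⌋ := Int.floor_nonneg.2 (mul_nonneg ht.1 (by positivity))
  have hdyAs : dyA n₀ s = ((A:ℝ))/2^n₀ := by
    rw [dyA, hA]
    congr 1
    exact_mod_cast (Int.toNat_of_nonneg hAnn).symm
  have hdyAt : dyA n₀ t = ((B:ℝ))/2^n₀ := by
    rw [dyA, hB]
    congr 1
    exact_mod_cast (Int.toNat_of_nonneg hBnn).symm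
  have hA2 : A ≤ 2^n₀ := by
    rw [hA]
    apply Int.toNat_le.2
    push_cast
    have := Int.floor_le_floor (R := ℝ) (show s * 2^n₀ ≤ (((2^n₀:ℤ)):ℝ) by
      push_cast; nlinarith [hs.1, hs.2])
    rwa [Int.floor_intCast] at this
  have hB2 : B ≤ 2^n₀ := by
    rw [hB]
    apply Int.toNat_le.2
    push_cast
    have := Int.floor_le_floor (R := ℝ) (show t * 2^n₀ ≤ (((2^n₀:ℤ)):ℝ) by
      push_cast; nlinarith [ht.1, ht.2])
    rwa [Int.floor_intCast] at this
  have hmid : d (dyA n₀ s) (dyA n₀ t) ≤ (2:ℝ)^n₀ * ((n₀:ℝ) * (2:ℝ)^(-(n₀:ℝ)/2)) := by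
    have hw : (0:ℝ) ≤ (n₀:ℝ) * (2:ℝ)^(-(n₀:ℝ)/2) := by positivity
    rcases le_total A B with h | h
    · rw [hdyAs, hdyAt]
      refine (horizL d hrefl htriangle n₀ hdyadic le_rfl B hB2 A h).trans ?_
      apply mul_le_mul_of_nonneg_right _ hw
      have : ((B:ℝ)) ≤ (2:ℝ)^n₀ := by exact_mod_cast hB2
      have : (0:ℝ) ≤ (A:ℝ) := by positivity
      push_cast
      linarith
    · rw [hdyAs, hdyAt, hsymm _ (memdiv hA2) _ (memdiv hB2)]
      refine (horizL d hrefl htriangle n₀ hdyadic le_rfl A hA2 B h).trans ?_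
      apply mul_le_mul_of_nonneg_right _ hw
      have : ((A:ℝ)) ≤ (2:ℝ)^n₀ := by exact_mod_cast hA2
      have : (0:ℝ) ≤ (B:ℝ) := by positivity
      push_cast
      linarith
  have tri1 := htriangle _ hs _ (dyA_mem hs n₀) _ ht
  have tri2 := htriangle _ (dyA_mem hs n₀) _ (dyA_mem ht n₀) _ ht
  have tail1 : d s (dyA n₀ s) ≤ 12 * ((n₀:ℝ)+1) * (Real.sqrt 2)⁻¹ ^ n₀ := by
    rw [hsymm _ hs _ (dyA_mem hs n₀)]
    exact approxL d hnonneg hrefl htriangle n₀ hdyadic hcont hs le_rfl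
  have tail2 : d (dyA n₀ t) t ≤ 12 * ((n₀:ℝ)+1) * (Real.sqrt 2)⁻¹ ^ n₀ :=
    approxL d hnonneg hrefl htriangle n₀ hdyadic hcont ht le_rfl
  linarith

end dlemmas

lemma sqrt_two_pow (n : ℕ) : Real.sqrt ((2:ℝ)^n) = (Real.sqrt 2)^n := by
  have h : ((Real.sqrt 2) ^ n)^2 = (2:ℝ)^n := by
    rw [← pow_mul, mul_comm, pow_mul, Real.sq_sqrt (by norm_num : (0:ℝ) ≤ 2)]
  rw [← h, Real.sqrt_sq (by positivity)]


set_option maxHeartbeats 2000000 in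
/-- Let `d` be a continuous pseudometric on `[0,1]`. If there is an integer
`n₀ ≥ 1` such that for every `n ≥ n₀` and every `i ∈ {1, …, 2ⁿ}` one has
`d((i-1) 2^{-n}, i 2^{-n}) ≤ n 2^{-n/2}`, then there is a constant `C > 0` such that for all
`s ≠ t` in `[0,1]`, `d(s,t) ≤ C (1 + log(1/|t - s|)) |t - s|^{1/2}`. -/
theorem chaining_modulus (d : ℝ → ℝ → ℝ)
    (hcont : ContinuousOn (fun p : ℝ × ℝ => d p.1 p.2) (Set.Icc 0 1 ×ˢ Set.Icc 0 1))
    (hnonneg : ∀ s ∈ Set.Icc (0:ℝ) 1, ∀ t ∈ Set.Icc (0:ℝ) 1, 0 ≤ d s t)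
    (hsymm : ∀ s ∈ Set.Icc (0:ℝ) 1, ∀ t ∈ Set.Icc (0:ℝ) 1, d s t = d t s)
    (hrefl : ∀ s ∈ Set.Icc (0:ℝ) 1, d s s = 0)
    (htriangle : ∀ s ∈ Set.Icc (0:ℝ) 1, ∀ t ∈ Set.Icc (0:ℝ) 1, ∀ u ∈ Set.Icc (0:ℝ) 1,
      d s u ≤ d s t + d t u)
    (n₀ : ℕ) (hn₀ : 1 ≤ n₀)
    (hdyadic : ∀ n : ℕ, n₀ ≤ n → ∀ i : ℕ, 1 ≤ i → i ≤ 2 ^ n →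
      d (((i : ℝ) - 1) / 2 ^ n) ((i : ℝ) / 2 ^ n) ≤ (n : ℝ) * (2:ℝ) ^ (-(n:ℝ) / 2)) :
    ∃ C : ℝ, 0 < C ∧ ∀ s ∈ Set.Icc (0:ℝ) 1, ∀ t ∈ Set.Icc (0:ℝ) 1, s ≠ t →
      d s t ≤ C * (1 + Real.log (1 / |t - s|)) * Real.sqrt |t - s| := by
  obtain ⟨M, hM⟩ : ∃ M : ℝ, M = 24 * ((n₀:ℝ)+1) * (Real.sqrt 2)⁻¹ ^ n₀
      + (2:ℝ)^n₀ * ((n₀:ℝ) * (2:ℝ)^(-(n₀:ℝ)/2)) := ⟨_, rfl⟩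
  have hM0 : 0 ≤ M := by rw [hM]; positivity
  obtain ⟨C, hC⟩ : ∃ C : ℝ, C = 71 + M * (Real.sqrt 2)^n₀ := ⟨_, rfl⟩
  have hC71 : 71 ≤ C := by
    rw [hC]
    nlinarith [pow_nonneg (Real.sqrt_nonneg 2) n₀, hM0,
      mul_nonneg hM0 (pow_nonneg (Real.sqrt_nonneg 2) n₀)]
  have hCpos : (0:ℝ) < C := by linarith
  refine ⟨C, hCpos, ?_⟩
  have hs2le : Real.sqrt 2 ≤ 1.42 := by
    rw [show (1.42:ℝ) = Real.sqrt (1.42^2) by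
      rw [Real.sqrt_sq (by norm_num : (0:ℝ) ≤ 1.42)]]
    apply Real.sqrt_le_sqrt; norm_num
  have key : ∀ s ∈ Set.Icc (0:ℝ) 1, ∀ t ∈ Set.Icc (0:ℝ) 1, s < t →
      d s t ≤ C * (1 + Real.log (1 / (t - s))) * Real.sqrt (t - s) := by
    intro s hs t ht hst
    set h : ℝ := t - s with hh
    have hpos : 0 < h := sub_pos.2 hst
    have hle1 : h ≤ 1 := by rw [hh]; linarith [hs.1, ht.2]
    have hL0 : 0 ≤ Real.log (1/h) := Real.log_nonneg (by rw [le_div_iff₀ hpos]; linarith)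
    set L : ℝ := Real.log (1/h) with hLdef
    have hP0 : 0 ≤ (1 + L) * Real.sqrt h := mul_nonneg (by linarith) (Real.sqrt_nonneg h)
    by_cases hcase : h ≤ ((2:ℝ)^n₀)⁻¹
    · -- CASE A : h small
      set n := ⌊Real.logb 2 (1/h)⌋₊ with hn
      have h2n₀ : (2:ℝ)^n₀ ≤ 1/h := by
        rw [le_div_iff₀ hpos]
        calc (2:ℝ)^n₀ * h ≤ (2:ℝ)^n₀ * ((2:ℝ)^n₀)⁻¹ :=
              mul_le_mul_of_nonneg_left hcase (by positivity)
          _ = 1 := by field_simp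
      have hlogb_n₀ : (n₀:ℝ) ≤ Real.logb 2 (1/h) := by
        calc (n₀:ℝ) = Real.logb 2 ((2:ℝ)^n₀) := by
              rw [Real.logb_pow, Real.logb_self_eq_one (by norm_num), mul_one]
          _ ≤ Real.logb 2 (1/h) :=
              Real.logb_le_logb_of_le (by norm_num) (by positivity) h2n₀
      have hn₀n : n₀ ≤ n := Nat.le_floor hlogb_n₀
      have hfl : (n:ℝ) ≤ Real.logb 2 (1/h) :=
        Nat.floor_le (le_trans (by positivity) hlogb_n₀)
      have hpow_le : (2:ℝ)^n ≤ 1/h := by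
        have h1 := Real.rpow_le_rpow_of_exponent_le (by norm_num : (1:ℝ) ≤ 2) hfl
        rwa [Real.rpow_logb (by norm_num) (by norm_num) (by positivity),
          Real.rpow_natCast] at h1
      have hh2n : h ≤ ((2:ℝ)^n)⁻¹ := by
        rw [le_div_iff₀ hpos] at hpow_le
        rw [← one_div, le_div_iff₀ (by positivity : (0:ℝ) < (2:ℝ)^n)]
        linarith
      have hh2n' : ((2:ℝ)^n)⁻¹ ≤ 2 * h := by
        have hlt : Real.logb 2 (1/h) < (n:ℝ) + 1 := by
          rw [hn]; exact_mod_cast Nat.lt_floor_add_one (Real.logb 2 (1/h))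
        have h2 : (1:ℝ)/h < 2 * (2:ℝ)^n := by
          calc (1:ℝ)/h = (2:ℝ) ^ Real.logb 2 (1/h) :=
                (Real.rpow_logb (by norm_num) (by norm_num) (by positivity)).symm
            _ < (2:ℝ) ^ ((n:ℝ)+1) := Real.rpow_lt_rpow_of_exponent_lt (by norm_num) hlt
            _ = 2 * (2:ℝ)^n := by
                rw [Real.rpow_add (by norm_num), Real.rpow_one, Real.rpow_natCast]; ring
        rw [div_lt_iff₀ hpos] at h2
        have hinv : ((2:ℝ)^n)⁻¹ * (2:ℝ)^n = 1 := inv_mul_cancel₀ (by positivity)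
        nlinarith [pow_pos (show (0:ℝ) < 2 by norm_num) n]
      -- tails
      have tail1 : d s (dyA n s) ≤ 12 * ((n:ℝ)+1) * (Real.sqrt 2)⁻¹ ^ n := by
        rw [hsymm _ hs _ (dyA_mem hs n)]
        exact approxL d hnonneg hrefl htriangle n₀ hdyadic hcont hs hn₀n
      have tail2 : d (dyA n t) t ≤ 12 * ((n:ℝ)+1) * (Real.sqrt 2)⁻¹ ^ n :=
        approxL d hnonneg hrefl htriangle n₀ hdyadic hcont ht hn₀n
      -- middle
      have hmid : d (dyA n s) (dyA n t) ≤ ((n:ℝ)+1) * (Real.sqrt 2)⁻¹ ^ n := by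
        have hW : ((n:ℝ)) * (2:ℝ) ^ (-(n:ℝ)/2) = (n:ℝ) * (Real.sqrt 2)⁻¹ ^ n := by
          rw [w_eq]
        set A := ⌊s * 2^n⌋ with hA
        set B := ⌊t * 2^n⌋ with hB
        have hAnn : (0:ℤ) ≤ A := Int.floor_nonneg.2 (mul_nonneg hs.1 (by positivity))
        have hAB : A ≤ B := Int.floor_le_floor
          (mul_le_mul_of_nonneg_right hst.le (by positivity))
        have hBA : B ≤ A + 1 := by
          have h1 : t * 2^n ≤ s * 2^n + 1 := by
            have h2 : h * 2^n ≤ 1 := by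
              rw [← one_div, le_div_iff₀ (by positivity : (0:ℝ) < (2:ℝ)^n)] at hh2n
              linarith
            rw [hh] at h2; nlinarith
          calc B ≤ ⌊s * 2^n + 1⌋ := Int.floor_le_floor h1
            _ = A + 1 := by rw [Int.floor_add_one]
        have hB2 : B ≤ 2^n := by
          have h1 := Int.floor_le_floor (R := ℝ) (show t * 2^n ≤ (((2^n:ℤ)):ℝ) by
            push_cast; nlinarith [ht.1, ht.2, pow_pos (show (0:ℝ) < 2 by norm_num) n])
          rwa [Int.floor_intCast] at h1
        rcases (by omega : B = A ∨ B = A + 1) with hBe | hBe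
        · have heq : dyA n t = dyA n s := by rw [dyA, dyA, ← hA, ← hB, hBe]
          rw [heq, hrefl _ (dyA_mem hs n)]
          positivity
        · have h1 : 1 ≤ B.toNat := by omega
          have h2 : B.toNat ≤ 2^n := Int.toNat_le.2 (by exact_mod_cast hB2)
          have hbnn : (0:ℤ) ≤ B := by omega
          have hcast : ((B.toNat : ℝ)) = ((B:ℝ)) := by
            exact_mod_cast Int.toNat_of_nonneg hbnn
          have hd := hdyadic n hn₀n B.toNat h1 h2
          rw [hcast] at hd
          have e1 : ((B:ℝ) - 1) / 2^n = dyA n s := by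
            rw [dyA, ← hA]
            congr 1
            rw [hBe]; push_cast; ring
          have e2 : ((B:ℝ)) / 2^n = dyA n t := by rw [dyA, ← hB]
          rw [e1, e2, hW] at hd
          have hrpos : (0:ℝ) ≤ (Real.sqrt 2)⁻¹ ^ n := by positivity
          nlinarith
      have tri1 := htriangle _ hs _ (dyA_mem hs n) _ ht
      have tri2 := htriangle _ (dyA_mem hs n) _ (dyA_mem ht n) _ ht
      have htot : d s t ≤ 25 * ((n:ℝ)+1) * (Real.sqrt 2)⁻¹ ^ n := by linarith
      -- convert to the target form
      have hrn_sqrt : (Real.sqrt 2)⁻¹ ^ n = Real.sqrt (((2:ℝ)^n)⁻¹) := by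
        rw [Real.sqrt_inv, sqrt_two_pow, inv_pow]
      have hsq : (Real.sqrt 2)⁻¹ ^ n ≤ Real.sqrt 2 * Real.sqrt h := by
        rw [hrn_sqrt, ← Real.sqrt_mul (by norm_num : (0:ℝ) ≤ 2)]
        exact Real.sqrt_le_sqrt hh2n'
      have hnL : (n:ℝ) + 1 ≤ 2 * (1 + L) := by
        have hlog2 : (0.6931471803:ℝ) < Real.log 2 := Real.log_two_gt_d9
        have hfl2 : (n:ℝ) ≤ L / Real.log 2 := by
          rw [hLdef]; exact hfl
        have : L / Real.log 2 ≤ 2 * L := by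
          rw [div_le_iff₀ (by linarith)]
          nlinarith
        linarith
      calc d s t ≤ 25 * ((n:ℝ)+1) * (Real.sqrt 2)⁻¹ ^ n := htot
        _ ≤ 25 * (2*(1+L)) * (Real.sqrt 2 * Real.sqrt h) := by
            apply mul_le_mul (by nlinarith) hsq (by positivity) (by nlinarith)
        _ = (50 * Real.sqrt 2) * ((1+L) * Real.sqrt h) := by ring
        _ ≤ C * ((1+L) * Real.sqrt h) := by
            apply mul_le_mul_of_nonneg_right _ hP0
            nlinarith
        _ = C * (1 + L) * Real.sqrt h := by ring
    · -- CASE B : h large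
      push_neg at hcase
      have hb' := boundL d hnonneg hrefl htriangle n₀ hdyadic hcont hsymm hs ht
      have hsq : ((Real.sqrt 2)^n₀)⁻¹ ≤ Real.sqrt h := by
        have h1 : Real.sqrt (((2:ℝ)^n₀)⁻¹) ≤ Real.sqrt h := Real.sqrt_le_sqrt hcase.le
        rwa [Real.sqrt_inv, sqrt_two_pow] at h1
      have hsq2 : ((Real.sqrt 2)^n₀)⁻¹ ≤ (1 + L) * Real.sqrt h :=
        hsq.trans (le_mul_of_one_le_left (Real.sqrt_nonneg h) (by linarith))
      calc d s t ≤ M := by rw [hM]; exact hb'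
        _ = (M * (Real.sqrt 2)^n₀) * ((Real.sqrt 2)^n₀)⁻¹ := by
            field_simp
        _ ≤ C * ((1+L) * Real.sqrt h) := by
            apply mul_le_mul (by rw [hC]; nlinarith [pow_nonneg (Real.sqrt_nonneg 2) n₀]) hsq2 (by positivity) hCpos.le
        _ = C * (1 + L) * Real.sqrt h := by ring
  intro s hs t ht hne
  rcases hne.lt_or_gt with hlt | hlt
  · rw [abs_of_pos (by linarith : (0:ℝ) < t - s)]
    exact key s hs t ht hlt
  · rw [show |t - s| = s - t by rw [abs_of_neg (by linarith : t - s < 0)]; ring]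
    rw [hsymm s hs t ht]
    exact key t ht s hs hlt
end
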